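/- In any tree T, for every vertex v and every path p in T containing v, if s_p denotes the unique vertex of p minimizing distance to a fixed root w, then the subpath of p from any vertex u of p to s_p is internally disjoint from the path from s_p to w, and the concatenation of the u-to-s_p subpath of p with the s_p-to-w path equals the unique u-to-w path in T. -/

import Mathlib

private lemma tree_path_length_eq_dist {V : Type*} [DecidableEq V] {T : SimpleGraph V} (hT : T.IsTree)
    {s w : V} (R : T.Walk s w) (hR : R.IsPath) : R.length = T.dist s w := by
  obtain ⟨W, hW⟩ := hT.isConnected.exists_walk_length_eq_dist s w
  have hWb : W.bypass.IsPath := W.bypass_isPath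
  obtain ⟨p, hp, hup⟩ := hT.existsUnique_path s w
  have hRW : R = W.bypass := (hup R hR).trans (hup W.bypass hWb).symm
  have h1 : W.bypass.length ≤ T.dist s w := hW ▸ W.length_bypass_le
  have h2 : T.dist s w ≤ W.bypass.length := SimpleGraph.dist_le _
  rw [hRW]; omega

private lemma strict_dist {V : Type*} [DecidableEq V] {T : SimpleGraph V} (hT : T.IsTree)
    {s w v : V} (R : T.Walk s w) (hR : R.IsPath) (hv : v ∈ R.support) (hvs : v ≠ s) :
    T.dist v w < T.dist s w := by
  have h1 : (R.takeUntil v hv).length + (R.dropUntil v hv).length = R.length := by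
    have := congr_arg SimpleGraph.Walk.length (R.take_spec hv)
    rwa [SimpleGraph.Walk.length_append] at this
  have h2 : T.dist v w ≤ (R.dropUntil v hv).length := SimpleGraph.dist_le _
  have h3 : (R.takeUntil v hv).length ≠ 0 := by
    intro h0
    exact hvs ((SimpleGraph.Walk.eq_of_length_eq_zero h0)).symm
  have h4 : R.length = T.dist s w := tree_path_length_eq_dist hT R hR
  omega

/-- In a tree rooted at `w`, for any vertex `u` of a path `P` with peak `s`, the subpath of
`P` from `u` to `s` is internally disjoint from the `s`-`w` path, and their concatenation
is a path, hence the unique `u`-`w` path in the tree. -/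
theorem stmt_1 {V : Type*} [Fintype V] (T : SimpleGraph V) (hT : T.IsTree)
    (w : V) {a b : V} (P : T.Walk a b) (hP : P.IsPath)
    (s : V) (hs : s ∈ P.support)
    (hmin : ∀ v ∈ P.support, T.dist s w ≤ T.dist v w)
    (u : V) (hu : u ∈ P.support) :
    ∃ Q : T.Walk u s, Q.IsPath ∧ (∀ v ∈ Q.support, v ∈ P.support) ∧
      ∀ R : T.Walk s w, R.IsPath →
        (∀ v ∈ Q.support, v ∈ R.support → v = s) ∧ (Q.append R).IsPath := by
  classical
  -- construct Q inside P
  obtain ⟨Q, hQp, hQsub⟩ :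
      ∃ Q : T.Walk u s, Q.IsPath ∧ ∀ v ∈ Q.support, v ∈ P.support := by
    by_cases h : s ∈ (P.takeUntil u hu).support
    · refine ⟨((P.takeUntil u hu).dropUntil s h).reverse, ?_, ?_⟩
      · exact ((hP.takeUntil hu).dropUntil h).reverse
      · intro v hv
        rw [SimpleGraph.Walk.support_reverse, List.mem_reverse] at hv
        exact P.support_takeUntil_subset hu
          ((P.takeUntil u hu).support_dropUntil_subset h hv)
    · have h' : s ∈ (P.dropUntil u hu).support := by
        have := P.take_spec hu
        rw [← this, SimpleGraph.Walk.mem_support_append_iff] at hs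
        tauto
      refine ⟨(P.dropUntil u hu).takeUntil s h', (hP.dropUntil hu).takeUntil h', ?_⟩
      intro v hv
      exact P.support_dropUntil_subset hu
        ((P.dropUntil u hu).support_takeUntil_subset h' hv)
  refine ⟨Q, hQp, hQsub, fun R hR => ?_⟩
  have hdisj : ∀ v ∈ Q.support, v ∈ R.support → v = s := by
    intro v hvQ hvR
    by_contra hvs
    have h1 : T.dist v w < T.dist s w := strict_dist hT R hR hvR hvs
    have h2 : T.dist s w ≤ T.dist v w := hmin v (hQsub v hvQ)
    omega
  refine ⟨hdisj, ?_⟩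
  rw [SimpleGraph.Walk.isPath_def, SimpleGraph.Walk.support_append, List.nodup_append]
  refine ⟨hQp.support_nodup, (List.nodup_cons.mp (by
    rw [← R.support_eq_cons]; exact hR.support_nodup)).2, ?_⟩
  intro v hvQ v' hvR hvv'
  subst hvv'
  have hv : v ∈ R.support := List.mem_of_mem_tail hvR
  have : v = s := hdisj v hvQ hv
  subst this
  -- v = s is in R.support.tail, but R.support = s :: tail nodup
  have := hR.support_nodup
  rw [R.support_eq_cons, List.nodup_cons] at this
  exact this.1 hvR
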